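/- Any regular non-null smooth curve admits, locally, a reparametrization satisfying the tangential part of the conformal circle equation: there exists a new parameter σ such that ⟨∇_{γ'}∇_{γ'}γ', γ'⟩ = 3⟨γ',∇_{γ'}γ'⟩²/⟨γ',γ'⟩ − (3/2)⟨∇_{γ'}γ',∇_{γ'}γ'⟩ + ⟨γ',γ'⟩P(γ',γ') − 2P(γ',γ')⟨γ',γ'⟩ holds, where derivatives are with respect to σ. (It suffices to prove local solvability of the resulting third-order ODE for the reparametrization τ(σ).) -/

import Mathlib

open scoped RealInnerProductSpace

lemma stmt10_aux {F : Type*} [NormedAddCommGroup F] [InnerProductSpace ℝ F]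
    (vA vB vC : F) (a b Gv : ℝ) (ha : a ≠ 0) (h1 : (⟪vA, vA⟫ : ℝ) ≠ 0)
    (hG : Gv = ((3/2) * b^2 + a^4 *
      (3 * ⟪vB, vA⟫^2 / ⟪vA, vA⟫^2 - (3/2) * ⟪vB, vB⟫ / ⟪vA, vA⟫
        - ⟪vC, vA⟫ / ⟪vA, vA⟫)) / a) :
    ⟪a • (a • a • vC + b • vB) + b • a • vB + (b • a • vB + Gv • vA), a • vA⟫
      = 3 * ⟪a • vA, a • a • vB + b • vA⟫^2 / ⟪a • vA, a • vA⟫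
        - (3/2) * ⟪a • a • vB + b • vA, a • a • vB + b • vA⟫ := by
  simp only [inner_add_left, inner_add_right, real_inner_smul_left, real_inner_smul_right]
  subst hG
  field_simp
  simp only [show (⟪vA,vB⟫:ℝ) = ⟪vB,vA⟫ from real_inner_comm vB vA]
  ring


/-- Any regular (non-null) smooth curve in flat ℝⁿ admits, locally, a reparametrization
satisfying the tangential part of the conformal circle equation (with `P = 0`):
there is a local solution `τ(σ)` with prescribed `τ(0)`, `τ'(0) > 0`, `τ''(0)` of the
third-order ODE obtained by pairing the conformal circle equation with the velocity,
`⟨c''', c'⟩ = 3⟨c',c''⟩²/⟨c',c'⟩ − (3/2)⟨c'',c''⟩` for `c = γ ∘ τ`. -/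
theorem stmt10 (n : ℕ) (hn : 3 ≤ n)
    (γ : ℝ → EuclideanSpace ℝ (Fin n)) (hγ : ContDiff ℝ (⊤ : ℕ∞) γ)
    (hreg : ∀ t, deriv γ t ≠ 0)
    (a0 a1 a2 : ℝ) (ha1 : 0 < a1) :
    ∃ ε > (0:ℝ), ∃ τ : ℝ → ℝ,
      τ 0 = a0 ∧ deriv τ 0 = a1 ∧ deriv (deriv τ) 0 = a2 ∧
      ∀ s ∈ Set.Ioo (-ε) ε, 0 < deriv τ s ∧
        ⟪iteratedDeriv 3 (γ ∘ τ) s, deriv (γ ∘ τ) s⟫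
          = 3 * ⟪deriv (γ ∘ τ) s, iteratedDeriv 2 (γ ∘ τ) s⟫ ^ 2
              / ⟪deriv (γ ∘ τ) s, deriv (γ ∘ τ) s⟫
            - (3/2) * ⟪iteratedDeriv 2 (γ ∘ τ) s, iteratedDeriv 2 (γ ∘ τ) s⟫ := by
  -- Derivatives of γ
  set A := deriv γ with hAdef
  have hγd : Differentiable ℝ γ := hγ.differentiable (by simp)
  have hA : ContDiff ℝ (⊤:ℕ∞) A := (contDiff_infty_iff_deriv.mp hγ).2
  set B := deriv A with hBdef
  have hAd : Differentiable ℝ A := hA.differentiable (by simp)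
  have hB : ContDiff ℝ (⊤:ℕ∞) B := (contDiff_infty_iff_deriv.mp hA).2
  set C := deriv B with hCdef
  have hBd : Differentiable ℝ B := hB.differentiable (by simp)
  -- scalar invariants
  set g1 : ℝ → ℝ := fun x => ⟪A x, A x⟫ with hg1def
  set g2 : ℝ → ℝ := fun x => ⟪B x, A x⟫ with hg2def
  set g3 : ℝ → ℝ := fun x => ⟪C x, A x⟫ with hg3def
  set g4 : ℝ → ℝ := fun x => ⟪B x, B x⟫ with hg4def
  have hg1pos : ∀ x, 0 < g1 x := fun x =>
    lt_of_le_of_ne real_inner_self_nonneg (Ne.symm (inner_self_ne_zero.mpr (hreg x)))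
  have hg1c : ContDiff ℝ 1 g1 := (hA.inner ℝ hA).of_le (by exact_mod_cast le_top)
  have hg2c : ContDiff ℝ 1 g2 := (hB.inner ℝ hA).of_le (by exact_mod_cast le_top)
  have hg3c : ContDiff ℝ 1 g3 :=
    (((contDiff_infty_iff_deriv.mp hB).2).inner ℝ hA).of_le (by exact_mod_cast le_top)
  have hg4c : ContDiff ℝ 1 g4 := (hB.inner ℝ hB).of_le (by exact_mod_cast le_top)
  -- the coefficient function
  set h : ℝ → ℝ := fun x => 3 * (g2 x)^2 / (g1 x)^2 - (3/2) * g4 x / g1 x - g3 x / g1 x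
    with hhdef
  have hhc : ContDiff ℝ 1 h := by
    apply ContDiff.sub
    apply ContDiff.sub
    · exact ((contDiff_const.mul (hg2c.pow 2)).div (hg1c.pow 2)
        (fun x => pow_ne_zero _ (hg1pos x).ne'))
    · exact ((contDiff_const.mul hg4c).div hg1c (fun x => (hg1pos x).ne'))
    · exact (hg3c.div hg1c (fun x => (hg1pos x).ne'))
  -- the vector field on ℝ³
  set W : ℝ × ℝ × ℝ → ℝ × ℝ × ℝ := fun p =>
    (p.2.1, p.2.2, ((3/2) * p.2.2^2 + p.2.1^4 * h p.1) / p.2.1) with hWdef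
  have hWc : ContDiffAt ℝ 1 W (a0, a1, a2) := by
    apply ContDiffAt.prodMk
    · exact (contDiff_fst.comp contDiff_snd).contDiffAt
    apply ContDiffAt.prodMk
    · exact (contDiff_snd.comp contDiff_snd).contDiffAt
    apply ContDiffAt.div
    · apply ContDiffAt.add
      · exact (contDiff_const.mul ((contDiff_snd.comp contDiff_snd).pow 2)).contDiffAt
      · exact (((contDiff_fst.comp contDiff_snd).pow 4).mul
          (hhc.comp contDiff_fst)).contDiffAt
    · exact (contDiff_fst.comp contDiff_snd).contDiffAt
    · exact ha1.ne'
  obtain ⟨f, hf0, ε₀, hε₀, hf⟩ :=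
    hWc.exists_forall_mem_closedBall_exists_eq_forall_mem_Ioo_hasDerivAt₀ 0
  -- components of f
  set p1 : ℝ → ℝ := fun t => (f t).1 with hp1def
  set p2 : ℝ → ℝ := fun t => (f t).2.1 with hp2def
  set p3 : ℝ → ℝ := fun t => (f t).2.2 with hp3def
  have hf' : ∀ t ∈ Set.Ioo (-ε₀) ε₀, HasDerivAt f (W (f t)) t := by
    intro t ht; exact hf t (by simpa using ht)
  have hd1 : ∀ t ∈ Set.Ioo (-ε₀) ε₀, HasDerivAt p1 (p2 t) t := by
    intro t ht
    exact ((ContinuousLinearMap.fst ℝ ℝ (ℝ × ℝ)).hasFDerivAt.comp_hasDerivAt t (hf' t ht))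
  have hd2 : ∀ t ∈ Set.Ioo (-ε₀) ε₀, HasDerivAt p2 (p3 t) t := by
    intro t ht
    exact (((ContinuousLinearMap.fst ℝ ℝ ℝ).comp
      (ContinuousLinearMap.snd ℝ ℝ (ℝ × ℝ))).hasFDerivAt.comp_hasDerivAt t (hf' t ht))
  have hd3 : ∀ t ∈ Set.Ioo (-ε₀) ε₀,
      HasDerivAt p3 (((3/2) * (p3 t)^2 + (p2 t)^4 * h (p1 t)) / p2 t) t := by
    intro t ht
    exact (((ContinuousLinearMap.snd ℝ ℝ ℝ).comp
      (ContinuousLinearMap.snd ℝ ℝ (ℝ × ℝ))).hasFDerivAt.comp_hasDerivAt t (hf' t ht))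
  have hp10 : p1 0 = a0 := by simp [hp1def, hf0]
  have hp20 : p2 0 = a1 := by simp [hp2def, hf0]
  have hp30 : p3 0 = a2 := by simp [hp3def, hf0]
  have h0mem : (0:ℝ) ∈ Set.Ioo (-ε₀) ε₀ := by constructor <;> simp [hε₀] <;> linarith
  -- shrink to make p2 positive
  have hp2cont : ContinuousAt p2 0 := (hd2 0 h0mem).continuousAt
  obtain ⟨δ, hδ, hδpos⟩ : ∃ δ > 0, ∀ t, |t| < δ → 0 < p2 t := by
    have := hp2cont.eventually (p := fun y => 0 < y) ?_
    · rw [Metric.eventually_nhds_iff] at this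
      obtain ⟨δ, hδ, hb⟩ := this
      exact ⟨δ, hδ, fun t ht => hb (by simpa [Real.dist_eq] using ht)⟩
    · exact isOpen_Ioi.eventually_mem (by simpa [hp20] using ha1)
  -- the final interval
  refine ⟨min ε₀ δ, lt_min hε₀ hδ, p1, hp10, ?_, ?_, ?_⟩
  · rw [(hd1 0 h0mem).deriv, hp20]
  · have hev : deriv p1 =ᶠ[nhds 0] p2 :=
      Filter.eventuallyEq_of_mem (Ioo_mem_nhds h0mem.1 h0mem.2)
        (fun t ht => (hd1 t ht).deriv)
    rw [hev.deriv_eq, (hd2 0 h0mem).deriv, hp30]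
  intro s hs
  have hs₀ : s ∈ Set.Ioo (-ε₀) ε₀ := by
    have h1 := hs.1; have h2 := hs.2; have h3 := min_le_left ε₀ δ
    exact ⟨by linarith, by linarith⟩
  have hp2s : 0 < p2 s := by
    apply hδpos
    rw [abs_lt]
    constructor
    · have := hs.1; have := min_le_right ε₀ δ; linarith
    · have := hs.2; have := min_le_right ε₀ δ; linarith
  -- derivative facts on the interval
  have hc1 : ∀ t ∈ Set.Ioo (-ε₀) ε₀, HasDerivAt (γ ∘ p1) (p2 t • A (p1 t)) t := by
    intro t ht
    exact ((hγd (p1 t)).hasDerivAt).scomp t (hd1 t ht)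
  have hA1 : ∀ t ∈ Set.Ioo (-ε₀) ε₀,
      HasDerivAt (fun u => A (p1 u)) (p2 t • B (p1 t)) t := by
    intro t ht
    exact ((hAd (p1 t)).hasDerivAt).scomp t (hd1 t ht)
  have hB1 : ∀ t ∈ Set.Ioo (-ε₀) ε₀,
      HasDerivAt (fun u => B (p1 u)) (p2 t • C (p1 t)) t := by
    intro t ht
    exact ((hBd (p1 t)).hasDerivAt).scomp t (hd1 t ht)
  set d1 : ℝ → EuclideanSpace ℝ (Fin n) := fun t => p2 t • A (p1 t) with hd1def
  set d2 : ℝ → EuclideanSpace ℝ (Fin n) :=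
    fun t => p2 t • (p2 t • B (p1 t)) + p3 t • A (p1 t) with hd2def
  have hc2 : ∀ t ∈ Set.Ioo (-ε₀) ε₀, HasDerivAt d1 (d2 t) t := by
    intro t ht
    exact (hd2 t ht).smul (hA1 t ht)
  set G : ℝ → ℝ := fun t => ((3/2) * (p3 t)^2 + (p2 t)^4 * h (p1 t)) / p2 t with hGdef
  set E3 : ℝ → EuclideanSpace ℝ (Fin n) := fun t =>
    (p2 t • (p2 t • (p2 t • C (p1 t)) + p3 t • B (p1 t)) + p3 t • (p2 t • B (p1 t)))
      + (p3 t • (p2 t • B (p1 t)) + G t • A (p1 t)) with hE3def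
  have hc3 : HasDerivAt d2 (E3 s) s := by
    have h1 : HasDerivAt (fun y => p2 y • (p2 y • B (p1 y)))
        (p2 s • (p2 s • (p2 s • C (p1 s)) + p3 s • B (p1 s)) + p3 s • (p2 s • B (p1 s))) s :=
      (hd2 s hs₀).smul ((hd2 s hs₀).smul (hB1 s hs₀))
    have h2 : HasDerivAt (fun y => p3 y • A (p1 y))
        (p3 s • (p2 s • B (p1 s)) + G s • A (p1 s)) s :=
      (hd3 s hs₀).smul (hA1 s hs₀)
    exact h1.add h2
  -- identify the iterated derivatives at s
  have hder1 : ∀ t ∈ Set.Ioo (-ε₀) ε₀, deriv (γ ∘ p1) t = d1 t :=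
    fun t ht => (hc1 t ht).deriv
  have hder2 : ∀ t ∈ Set.Ioo (-ε₀) ε₀, deriv (deriv (γ ∘ p1)) t = d2 t := by
    intro t ht
    have hev : deriv (γ ∘ p1) =ᶠ[nhds t] d1 :=
      Filter.eventuallyEq_of_mem (Ioo_mem_nhds ht.1 ht.2) hder1
    rw [hev.deriv_eq, (hc2 t ht).deriv]
  have hI2 : iteratedDeriv 2 (γ ∘ p1) s = d2 s := by
    rw [show (2:ℕ) = 1 + 1 from rfl, iteratedDeriv_succ, iteratedDeriv_one]
    exact hder2 s hs₀
  have hI3 : iteratedDeriv 3 (γ ∘ p1) s = E3 s := by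
    rw [show (3:ℕ) = 2 + 1 from rfl, iteratedDeriv_succ]
    have hev : iteratedDeriv 2 (γ ∘ p1) =ᶠ[nhds s] d2 := by
      apply Filter.eventuallyEq_of_mem (Ioo_mem_nhds hs₀.1 hs₀.2)
      intro t ht
      rw [show (2:ℕ) = 1 + 1 from rfl, iteratedDeriv_succ, iteratedDeriv_one]
      exact hder2 t ht
    rw [hev.deriv_eq, hc3.deriv]
  constructor
  · rw [(hd1 s hs₀).deriv]; exact hp2s
  · rw [hder1 s hs₀, hI2, hI3]
    have hGeq : G s = ((3/2) * (p3 s)^2 + (p2 s)^4 *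
        (3 * ⟪B (p1 s), A (p1 s)⟫^2 / ⟪A (p1 s), A (p1 s)⟫^2
          - (3/2) * ⟪B (p1 s), B (p1 s)⟫ / ⟪A (p1 s), A (p1 s)⟫
          - ⟪C (p1 s), A (p1 s)⟫ / ⟪A (p1 s), A (p1 s)⟫)) / p2 s := rfl
    have key := stmt10_aux (A (p1 s)) (B (p1 s)) (C (p1 s)) (p2 s) (p3 s) (G s)
      hp2s.ne' (hg1pos (p1 s)).ne' hGeq
    simpa only [hd1def, hd2def, hE3def] using key
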